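/- The function G(t) = 1 - t·₂F₁(1, 4/3; 5/3; 1-t) on (0,1) satisfies the ODE t - 1 + (t+1)G(t) - 3t(1-t)G'(t) = 0, with boundary values lim_{t→0+} G(t) = 1 and lim_{t→1-} G(t) = 0. -/

import Mathlib

open Real Filter Set Asymptotics MeasureTheory Complex

/-- The Gauss hypergeometric function `₂F₁(a, b; c; t)`, defined by its power series. -/
noncomputable def hyp (a b c t : ℝ) : ℝ :=
  ∑' n : ℕ, ((ascPochhammer ℝ n).eval a * (ascPochhammer ℝ n).eval b) /
    ((ascPochhammer ℝ n).eval c * (n.factorial : ℝ)) * t ^ n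

/-- `G(t) = 1 - t·₂F₁(1, 4/3; 5/3; 1-t)`. -/
noncomputable def Gfun (t : ℝ) : ℝ := 1 - t * hyp 1 (4/3) (5/3) (1 - t)

/-- coefficients of 2F1(1,4/3;5/3;x) -/
noncomputable def cc (n : ℕ) : ℝ :=
  (ascPochhammer ℝ n).eval (4/3) / (ascPochhammer ℝ n).eval (5/3)

lemma cc_zero : cc 0 = 1 := by simp [cc]

lemma cc_pos (n : ℕ) : 0 < cc n :=
  div_pos (ascPochhammer_pos n _ (by norm_num)) (ascPochhammer_pos n _ (by norm_num))

lemma cc_succ (n : ℕ) : cc (n + 1) = cc n * ((n + 4/3) / (n + 5/3)) := by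
  have h5 : (0:ℝ) < (ascPochhammer ℝ n).eval (5/3) := ascPochhammer_pos n _ (by norm_num)
  rw [cc, ascPochhammer_succ_eval, ascPochhammer_succ_eval, cc]
  rw [div_mul_div_comm]
  ring_nf

lemma cc_le_one (n : ℕ) : cc n ≤ 1 := by
  induction n with
  | zero => simp [cc_zero]
  | succ n ih =>
    rw [cc_succ]
    have h1 : ((n:ℝ) + 4/3) / (n + 5/3) ≤ 1 := by
      rw [div_le_one (by positivity)]; linarith
    calc cc n * ((n + 4/3) / (n + 5/3)) ≤ 1 * 1 :=
          mul_le_mul ih h1 (by positivity) one_pos.le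
      _ = 1 := by ring

lemma cc_anti : Antitone cc := by
  apply antitone_nat_of_succ_le
  intro n
  rw [cc_succ]
  have h1 : ((n:ℝ) + 4/3) / (n + 5/3) ≤ 1 := by
    rw [div_le_one (by positivity)]; linarith
  nlinarith [cc_pos n]

lemma cc_key (n : ℕ) : (3 * n + 5) * cc (n + 1) = (3 * n + 4) * cc n := by
  rw [cc_succ]
  have h : ((n:ℝ) + 5/3) ≠ 0 := by positivity
  field_simp

lemma cc_cube (n : ℕ) : cc n ^ 3 ≤ 4 / (3 * n + 4) := by
  induction n with
  | zero => simp [cc_zero]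
  | succ n ih =>
    have h5 : (0:ℝ) < 3 * n + 5 := by positivity
    have h4 : (0:ℝ) < 3 * n + 4 := by positivity
    have h7 : (0:ℝ) < 3 * (n:ℝ) + 7 := by positivity
    have hk : cc (n+1) = (3 * n + 4) / (3 * n + 5) * cc n := by
      have := cc_key n
      field_simp
      linarith [cc_key n]
    rw [hk, mul_pow, div_pow]
    have hccpos : (0:ℝ) ≤ cc n ^ 3 := pow_nonneg (cc_pos n).le 3
    have key : ((3 * (n:ℝ) + 4) ^ 3 / (3 * n + 5) ^ 3) * (4 / (3 * n + 4)) ≤ 4 / (3 * (n+1) + 4) := by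
      rw [div_mul_div_comm, div_le_div_iff₀ (by positivity) (by positivity)]
      push_cast
      nlinarith [sq_nonneg ((3:ℝ) * n + 5), sq_nonneg ((n:ℝ))]
    calc (3 * (n:ℝ) + 4) ^ 3 / (3 * n + 5) ^ 3 * cc n ^ 3
        ≤ (3 * (n:ℝ) + 4) ^ 3 / (3 * n + 5) ^ 3 * (4 / (3 * n + 4)) := by
          apply mul_le_mul_of_nonneg_left ih (by positivity)
      _ ≤ 4 / (3 * ((n:ℕ):ℝ) + 7) := by
          convert key using 2
          push_cast; ring
      _ = 4 / (3 * ((n+1:ℕ):ℝ) + 4) := by push_cast; ring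

lemma cc_tendsto : Tendsto cc atTop (nhds 0) := by
  have hb : Tendsto (fun n : ℕ => 4 / (3 * (n:ℝ) + 4)) atTop (nhds 0) := by
    apply Tendsto.div_atTop tendsto_const_nhds
    apply Filter.tendsto_atTop_add_const_right
    exact (tendsto_natCast_atTop_atTop).const_mul_atTop (by norm_num)
  have h3 : Tendsto (fun n => cc n ^ 3) atTop (nhds 0) :=
    squeeze_zero (fun n => pow_nonneg (cc_pos n).le 3) cc_cube hb
  rw [Metric.tendsto_atTop] at h3 ⊢
  intro ε hε
  obtain ⟨N, hN⟩ := h3 (ε ^ 3) (by positivity)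
  refine ⟨N, fun n hn => ?_⟩
  have := hN n hn
  rw [Real.dist_eq, sub_zero] at this ⊢
  rw [_root_.abs_of_pos (pow_pos (cc_pos n) 3)] at this
  rw [_root_.abs_of_pos (cc_pos n)]
  exact lt_of_pow_lt_pow_left₀ 3 hε.le this

noncomputable def ff (x : ℝ) : ℝ := ∑' n : ℕ, cc n * x ^ n

lemma hyp_eq (x : ℝ) : hyp 1 (4/3) (5/3) x = ff x := by
  unfold hyp ff
  congr 1; funext n
  rw [ascPochhammer_eval_one]
  have h5 : (0:ℝ) < (ascPochhammer ℝ n).eval (5/3) := ascPochhammer_pos n _ (by norm_num)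
  have hf : (0:ℝ) < (n.factorial : ℝ) := by positivity
  rw [cc]
  congr 1
  rw [mul_comm ((ascPochhammer ℝ n).eval (5/3)) _, mul_comm ((n.factorial : ℝ)) _]
  field_simp

lemma summable_ff {x : ℝ} (h0 : 0 ≤ x) (h1 : x < 1) : Summable (fun n : ℕ => cc n * x ^ n) := by
  apply Summable.of_nonneg_of_le
    (fun n => mul_nonneg (cc_pos n).le (by positivity))
    (fun n => ?_) (summable_geometric_of_lt_one h0 h1)
  calc cc n * x ^ n ≤ 1 * x ^ n :=
        mul_le_mul_of_nonneg_right (cc_le_one n) (by positivity)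
    _ = x ^ n := one_mul _

lemma ff_hasDerivAt {x : ℝ} (hx : x ∈ Set.Ioo (0:ℝ) 1) :
    HasDerivAt ff (∑' n : ℕ, cc n * ((n:ℝ) * x ^ (n - 1))) x := by
  obtain ⟨hx0, hx1⟩ := hx
  set r : ℝ := (1 + x) / 2 with hr
  have hr0 : 0 < r := by rw [hr]; linarith
  have hr1 : r < 1 := by rw [hr]; linarith
  have hxr : x < r := by rw [hr]; linarith
  have hu : Summable (fun n : ℕ => (n:ℝ) * r ^ (n - 1)) := by
    rw [← summable_nat_add_iff 1]
    apply Summable.of_nonneg_of_le (fun n => by positivity) (fun n => ?_)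
      ((summable_pow_mul_geometric_of_norm_lt_one 1 (r := r)
        (by rw [Real.norm_eq_abs, _root_.abs_of_pos hr0]; exact hr1)).add
        (summable_geometric_of_lt_one hr0.le hr1))
    simp only [Nat.add_sub_cancel]
    push_cast
    rw [add_mul, pow_one]
    norm_num
  exact hasDerivAt_tsum_of_isPreconnected hu isOpen_Ioo
    (convex_Ioo (-r) r).isPreconnected
    (fun n y _ => (hasDerivAt_pow n y).const_mul (cc n))
    (fun n y hy => by
      rw [Real.norm_eq_abs, _root_.abs_mul, _root_.abs_mul]
      have h1 : |cc n| ≤ 1 := by rw [_root_.abs_of_pos (cc_pos n)]; exact cc_le_one n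
      have h2 : |((n:ℝ))| = (n:ℝ) := _root_.abs_of_nonneg (Nat.cast_nonneg n)
      have h3 : |y ^ (n-1)| ≤ r ^ (n-1) := by
        rw [_root_.abs_pow]
        exact pow_le_pow_left₀ (_root_.abs_nonneg y) (_root_.abs_le.2 ⟨hy.1.le, hy.2.le⟩) _
      calc |cc n| * (|((n:ℝ))| * |y ^ (n-1)|) ≤ 1 * ((n:ℝ) * r ^ (n-1)) := by
            rw [h2]
            apply mul_le_mul h1 _ (by positivity) one_pos.le
            exact mul_le_mul_of_nonneg_left h3 (Nat.cast_nonneg n)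
        _ = (n:ℝ) * r ^ (n-1) := one_mul _)
    (show x ∈ Set.Ioo (-r) r from ⟨by linarith, hxr⟩)
    (summable_ff hx0.le hx1)
    (show x ∈ Set.Ioo (-r) r from ⟨by linarith, hxr⟩)

lemma ode_key {x : ℝ} (hx : x ∈ Set.Ioo (0:ℝ) 1) :
    3 * x * (1 - x) * (∑' n : ℕ, cc n * ((n:ℝ) * x ^ (n - 1))) + (2 - 4 * x) * ff x = 2 := by
  obtain ⟨hx0, hx1⟩ := hx
  set a : ℕ → ℝ := fun n => (3 * n + 2) * cc n * x ^ n with ha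
  have hxnorm : ‖x‖ < 1 := by rw [Real.norm_eq_abs, _root_.abs_of_pos hx0]; exact hx1
  have hsa : Summable a := by
    apply Summable.of_nonneg_of_le
      (fun n => by
        have := cc_pos n
        have := pow_pos hx0 n
        positivity)
      (fun n => ?_)
      (((summable_pow_mul_geometric_of_norm_lt_one 1 hxnorm).mul_left 3).add
        ((summable_geometric_of_lt_one hx0.le hx1).mul_left 2))
    simp only [ha]
    have h1 : cc n * x ^ n ≤ x ^ n := by
      calc cc n * x ^ n ≤ 1 * x ^ n :=
        mul_le_mul_of_nonneg_right (cc_le_one n) (pow_nonneg hx0.le n)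
      _ = x ^ n := one_mul _
    have h2 : (0:ℝ) ≤ (3 * n + 2 : ℝ) := by positivity
    calc (3 * (n:ℝ) + 2) * cc n * x ^ n = (3 * n) * (cc n * x ^ n) + 2 * (cc n * x ^ n) := by ring
      _ ≤ (3 * n) * x ^ n + 2 * x ^ n :=
          add_le_add (mul_le_mul_of_nonneg_left h1 (by positivity))
            (mul_le_mul_of_nonneg_left h1 (by norm_num))
      _ = 3 * ((n:ℝ) ^ 1 * x ^ n) + 2 * x ^ n := by ring
  have hsa1 : Summable (fun n => a (n + 1)) := (summable_nat_add_iff 1).2 hsa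
  -- x * D = ∑ n * cc n * x^n
  have hD : x * (∑' n : ℕ, cc n * ((n:ℝ) * x ^ (n - 1))) = ∑' n : ℕ, (n:ℝ) * cc n * x ^ n := by
    rw [← tsum_mul_left]
    congr 1; funext n
    cases n with
    | zero => simp
    | succ m =>
      simp only [Nat.add_sub_cancel]
      push_cast
      ring
  -- rewrite LHS as tsum of (a n - a (n+1))
  have hLHS : 3 * x * (1 - x) * (∑' n : ℕ, cc n * ((n:ℝ) * x ^ (n - 1))) + (2 - 4 * x) * ff x
      = ∑' n : ℕ, (a n - a (n + 1)) := by
    have e1 : 3 * x * (1 - x) * (∑' n : ℕ, cc n * ((n:ℝ) * x ^ (n - 1)))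
        = 3 * (1 - x) * (x * (∑' n : ℕ, cc n * ((n:ℝ) * x ^ (n - 1)))) := by ring
    rw [e1, hD, ff, ← tsum_mul_left, ← tsum_mul_left]
    have hs1 : Summable (fun n : ℕ => 3 * (1 - x) * ((n:ℝ) * cc n * x ^ n)) := by
      apply Summable.mul_left
      apply Summable.of_norm
      apply Summable.of_nonneg_of_le (fun n => norm_nonneg _) (fun n => ?_)
        (summable_pow_mul_geometric_of_norm_lt_one 1 hxnorm)
      rw [Real.norm_eq_abs, _root_.abs_mul, _root_.abs_mul, _root_.abs_of_nonneg (Nat.cast_nonneg n),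
        _root_.abs_of_pos (cc_pos n), _root_.abs_pow, _root_.abs_of_pos hx0, pow_one]
      calc (n:ℝ) * cc n * x ^ n ≤ (n:ℝ) * 1 * x ^ n := by
            gcongr
            exact cc_le_one n
        _ = (n:ℝ) * x ^ n := by ring
    have hs2 : Summable (fun n : ℕ => (2 - 4 * x) * (cc n * x ^ n)) :=
      (summable_ff hx0.le hx1).mul_left _
    rw [← Summable.tsum_add hs1 hs2]
    congr 1; funext n
    have hkey := cc_key n
    have : a (n + 1) = (3 * (n:ℝ) + 4) * cc n * x ^ (n + 1) := by
      simp only [ha]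
      push_cast
      have : (3 * ((n:ℝ) + 1) + 2) = 3 * (n:ℝ) + 5 := by ring
      rw [this, hkey]
    rw [this, ha]
    simp only []
    rw [pow_succ]
    ring
  rw [hLHS, Summable.tsum_sub hsa hsa1]
  have : ∑' n : ℕ, a (n + 1) = (∑' n, a n) - a 0 := by
    rw [Summable.tsum_eq_zero_add hsa]; ring
  rw [this, ha]
  simp [cc_zero]

set_option maxHeartbeats 1000000 in
lemma lim0 : Tendsto (fun t : ℝ => t * ff (1 - t)) (nhdsWithin 0 (Set.Ioi 0)) (nhds 0) := by
  rw [Metric.tendsto_nhdsWithin_nhds]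
  intro ε hε
  obtain ⟨N, hN⟩ := (Metric.tendsto_atTop.1 cc_tendsto) (ε / 2) (by linarith)
  have hcN : cc N < ε / 2 := by
    have := hN N le_rfl
    rwa [Real.dist_eq, sub_zero, _root_.abs_of_pos (cc_pos N)] at this
  refine ⟨min (ε / (2 * (N + 1))) 1, by positivity, ?_⟩
  intro t ht hdist
  rw [Real.dist_eq, sub_zero, _root_.abs_of_pos ht] at hdist
  have ht0 : 0 < t := ht
  have htε : t < ε / (2 * (N + 1)) := lt_of_lt_of_le hdist (min_le_left _ _)
  have ht1 : t < 1 := lt_of_lt_of_le hdist (min_le_right _ _)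
  set x := 1 - t with hxdef
  have hx0 : 0 ≤ x := by rw [hxdef]; linarith
  have hx1 : x < 1 := by rw [hxdef]; linarith
  have hsum := summable_ff hx0 hx1
  have hffnn : 0 ≤ ff x := tsum_nonneg (fun n => mul_nonneg (cc_pos n).le (pow_nonneg hx0 n))
  have hsplit := Summable.sum_add_tsum_nat_add N hsum
  have hhead : ∑ i ∈ Finset.range N, cc i * x ^ i ≤ N := by
    calc ∑ i ∈ Finset.range N, cc i * x ^ i ≤ ∑ i ∈ Finset.range N, (1:ℝ) := by
          apply Finset.sum_le_sum
          intro i _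
          calc cc i * x ^ i ≤ 1 * 1 :=
                mul_le_mul (cc_le_one i) (pow_le_one₀ hx0 hx1.le) (pow_nonneg hx0 i) one_pos.le
            _ = 1 := one_mul 1
      _ = N := by simp
  have htail : (∑' i : ℕ, cc (i + N) * x ^ (i + N)) ≤ cc N * (1 - x)⁻¹ := by
    have hsumtail : Summable (fun i : ℕ => cc (i + N) * x ^ (i + N)) :=
      (summable_nat_add_iff N).2 hsum
    calc (∑' i : ℕ, cc (i + N) * x ^ (i + N)) ≤ ∑' i : ℕ, cc N * x ^ i := by
          apply Summable.tsum_le_tsum _ hsumtail ((summable_geometric_of_lt_one hx0 hx1).mul_left _)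
          intro i
          have h1 : cc (i + N) ≤ cc N := cc_anti (Nat.le_add_left N i)
          have h2 : x ^ (i + N) ≤ x ^ i := pow_le_pow_of_le_one hx0 hx1.le (Nat.le_add_right i N)
          exact mul_le_mul h1 h2 (pow_nonneg hx0 _) (cc_pos N).le
      _ = cc N * (1 - x)⁻¹ := by rw [tsum_mul_left, tsum_geometric_of_lt_one hx0 hx1]
  have hful : ff x ≤ N + cc N * (1 - x)⁻¹ := by
    rw [ff, ← hsplit]; exact add_le_add hhead htail
  have h1x : (1 - x) = t := by rw [hxdef]; ring
  rw [Real.dist_eq, sub_zero, _root_.abs_of_nonneg (mul_nonneg ht0.le hffnn)]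
  calc t * ff x ≤ t * (N + cc N * (1 - x)⁻¹) := mul_le_mul_of_nonneg_left hful ht0.le
    _ = t * N + cc N * (t * t⁻¹) := by rw [h1x]; ring
    _ = t * N + cc N := by rw [mul_inv_cancel₀ ht0.ne']; ring
    _ < ε / 2 + ε / 2 := by
        apply add_lt_add _ hcN
        have h1 : t * N ≤ t * (N + 1) := mul_le_mul_of_nonneg_left (by linarith : (N:ℝ) ≤ N + 1) ht0.le
        have h2 : t * ((N:ℝ) + 1) < ε / (2 * (N + 1)) * (N + 1) :=
          mul_lt_mul_of_pos_right htε (by positivity)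
        have h3 : ε / (2 * ((N:ℝ) + 1)) * (N + 1) = ε / 2 := by
          rw [div_mul_eq_mul_div, div_eq_div_iff (by positivity) (by norm_num : (2:ℝ) ≠ 0)]
          ring
        linarith
    _ = ε := by ring

set_option maxHeartbeats 2000000 in
lemma ff_lim : Tendsto ff (nhdsWithin 0 (Set.Ioi 0)) (nhds 1) := by
  have hsub : Tendsto (fun x : ℝ => ff x - 1) (nhdsWithin 0 (Set.Ioi 0)) (nhds 0) := by
    have hbound : Tendsto (fun x : ℝ => x / (1 - x)) (nhdsWithin 0 (Set.Ioi 0)) (nhds 0) := by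
      have : ContinuousAt (fun x : ℝ => x / (1 - x)) 0 := by
        apply ContinuousAt.div continuousAt_id (by fun_prop)
        norm_num
      have h := this.tendsto.mono_left (nhdsWithin_le_nhds (s := Set.Ioi 0))
      norm_num at h
      exact h
    have hmem : Set.Ioo (0:ℝ) 1 ∈ nhdsWithin (0:ℝ) (Set.Ioi 0) :=
      Ioo_mem_nhdsGT_of_mem ⟨le_refl 0, one_pos⟩
    apply squeeze_zero' ?_ ?_ hbound
    · filter_upwards [hmem] with x hx
      obtain ⟨hx0, hx1⟩ := hx
      have hsum := summable_ff hx0.le hx1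
      rw [ff, Summable.tsum_eq_zero_add hsum, cc_zero]
      simp only [pow_zero, one_mul, add_sub_cancel_left]
      exact tsum_nonneg (fun n => mul_nonneg (cc_pos _).le (pow_nonneg hx0.le _))
    · filter_upwards [hmem] with x hx
      obtain ⟨hx0, hx1⟩ := hx
      have hsum := summable_ff hx0.le hx1
      rw [ff, Summable.tsum_eq_zero_add hsum, cc_zero]
      simp only [pow_zero, one_mul, add_sub_cancel_left]
      have hgeo : Summable (fun n : ℕ => x ^ (n + 1)) := by
        have : (fun n : ℕ => x ^ (n + 1)) = fun n : ℕ => x * x ^ n := by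
          funext n; rw [pow_succ']
        rw [this]
        exact (summable_geometric_of_lt_one hx0.le hx1).mul_left x
      calc (∑' n : ℕ, cc (n + 1) * x ^ (n + 1)) ≤ ∑' n : ℕ, x ^ (n + 1) := by
            have hs1 : Summable (fun n : ℕ => cc (n + 1) * x ^ (n + 1)) :=
              (summable_nat_add_iff 1).2 hsum
            apply Summable.tsum_le_tsum _ hs1 hgeo
            intro n
            calc cc (n + 1) * x ^ (n + 1) ≤ 1 * x ^ (n + 1) :=
                  mul_le_mul_of_nonneg_right (cc_le_one _) (pow_nonneg hx0.le _)
              _ = x ^ (n + 1) := one_mul _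
        _ = x * (1 - x)⁻¹ := by
            have : (fun n : ℕ => x ^ (n + 1)) = fun n : ℕ => x * x ^ n := by
              funext n; rw [pow_succ']
            rw [this, tsum_mul_left, tsum_geometric_of_lt_one hx0.le hx1]
        _ = x / (1 - x) := (div_eq_mul_inv x (1-x)).symm
  have := hsub.add (tendsto_const_nhds (x := (1:ℝ)))
  simpa using this

lemma Gfun_eq : Gfun = fun t : ℝ => 1 - t * ff (1 - t) := by
  funext t
  rw [Gfun, hyp_eq]

/-- `G` satisfies the ODE `t - 1 + (t+1)G(t) - 3t(1-t)G'(t) = 0` on `(0,1)`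
with boundary values `G(0+) = 1` and `G(1-) = 0`. -/
theorem stmt1 :
    (∀ t ∈ Set.Ioo (0 : ℝ) 1,
      ∃ g' : ℝ, HasDerivAt Gfun g' t ∧
        t - 1 + (t + 1) * Gfun t - 3 * t * (1 - t) * g' = 0) ∧
    Tendsto Gfun (nhdsWithin 0 (Set.Ioi 0)) (nhds 1) ∧
    Tendsto Gfun (nhdsWithin 1 (Set.Iio 1)) (nhds 0) := by
  refine ⟨?_, ?_, ?_⟩
  · intro t ht
    obtain ⟨ht0, ht1⟩ := ht
    have hx : (1 - t) ∈ Set.Ioo (0:ℝ) 1 := ⟨by linarith, by linarith⟩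
    set D : ℝ := ∑' n : ℕ, cc n * ((n:ℝ) * (1 - t) ^ (n - 1)) with hD
    have h1 : HasDerivAt (fun s : ℝ => 1 - s) (-1) t := (hasDerivAt_id t).const_sub 1
    have h2 : HasDerivAt (fun s : ℝ => ff (1 - s)) (D * -1) t :=
      (ff_hasDerivAt hx).comp t h1
    have h3 : HasDerivAt (fun s : ℝ => s * ff (1 - s))
        (1 * ff (1 - t) + t * (D * -1)) t := (hasDerivAt_id t).mul h2
    have h4 : HasDerivAt (fun s : ℝ => 1 - s * ff (1 - s))
        (-(1 * ff (1 - t) + t * (D * -1))) t := h3.const_sub 1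
    refine ⟨-(1 * ff (1 - t) + t * (D * -1)), ?_, ?_⟩
    · rw [Gfun_eq]; exact h4
    · have hk := ode_key hx
      rw [← hD] at hk
      rw [Gfun_eq]
      simp only []
      linear_combination (-t) * hk
  · rw [Gfun_eq]
    have := (tendsto_const_nhds (x := (1:ℝ))
      (f := nhdsWithin (0:ℝ) (Set.Ioi 0))).sub lim0
    simpa using this
  · have hmap : Tendsto (fun t : ℝ => 1 - t) (nhdsWithin 1 (Set.Iio 1))
        (nhdsWithin 0 (Set.Ioi 0)) := by
      apply tendsto_nhdsWithin_of_tendsto_nhds_of_eventually_within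
      · have hc : Continuous (fun t : ℝ => 1 - t) := by continuity
        have h := (hc.tendsto (1:ℝ)).mono_left (nhdsWithin_le_nhds (s := Set.Iio 1))
        norm_num at h
        exact h
      · filter_upwards [self_mem_nhdsWithin] with t ht
        simp only [Set.mem_Iio] at ht
        simp only [Set.mem_Ioi]
        linarith
    have hff := ff_lim.comp hmap
    have hid : Tendsto (fun t : ℝ => t) (nhdsWithin 1 (Set.Iio 1)) (nhds 1) :=
      tendsto_id.mono_left nhdsWithin_le_nhds
    rw [Gfun_eq]
    have := (tendsto_const_nhds (x := (1:ℝ))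
      (f := nhdsWithin (1:ℝ) (Set.Iio 1))).sub (hid.mul hff)
    simpa using this
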